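/- Let L ⊆ ℝⁿ × ℝⁿ be a Lagrangian subspace with respect to the standard symplectic form. Then there exists a subset I ⊆ {1,…,n} with complement J, and a symmetric n × n real matrix M (with blocks M_II, M_IJ, M_JI, M_JJ according to the splitting of indices into I and J), such that L = { (v,w) ∈ ℝⁿ × ℝⁿ : w_I = M_II v_I + M_IJ w_J and v_J = −M_JI v_I − M_JJ w_J }, where v_I denotes the subvector of v with indices in I, etc. In particular L is globally parametrized by the variables (v_I, w_J). -/

import Mathlib

open Matrix Finset

/-- The standard symplectic form on ℝⁿ × ℝⁿ:
`ω((v₁,w₁),(v₂,w₂)) = w₁ᵀ v₂ − w₂ᵀ v₁`. -/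
def symplForm {n : ℕ} (p q : (Fin n → ℝ) × (Fin n → ℝ)) : ℝ :=
  p.2 ⬝ᵥ q.1 - q.2 ⬝ᵥ p.1

/-- A subspace is isotropic if the symplectic form vanishes identically on it. -/
def IsIsotropic {n : ℕ} (L : Submodule ℝ ((Fin n → ℝ) × (Fin n → ℝ))) : Prop :=
  ∀ p ∈ L, ∀ q ∈ L, symplForm p q = 0

/-- A subspace is Lagrangian if it is isotropic and maximal among isotropic subspaces. -/
def IsLagrangian {n : ℕ} (L : Submodule ℝ ((Fin n → ℝ) × (Fin n → ℝ))) : Prop :=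
  IsIsotropic L ∧
    ∀ L' : Submodule ℝ ((Fin n → ℝ) × (Fin n → ℝ)), IsIsotropic L' → L ≤ L' → L' = L

namespace LagrangianRep

lemma symplForm_swap {n : ℕ} (p q : (Fin n → ℝ) × (Fin n → ℝ)) :
    symplForm q p = - symplForm p q := by
  simp only [symplForm]
  rw [dotProduct_comm q.2 p.1, dotProduct_comm p.2 q.1]
  ring

/-- The symplectic form as a bilinear form. -/
noncomputable def sympl (n : ℕ) :
    LinearMap.BilinForm ℝ ((Fin n → ℝ) × (Fin n → ℝ)) :=
  LinearMap.mk₂ ℝ symplForm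
    (fun p p' q => by
      simp only [symplForm, Prod.fst_add, Prod.snd_add, add_dotProduct, dotProduct_add]
      ring)
    (fun c p q => by
      simp only [symplForm, Prod.smul_fst, Prod.smul_snd, smul_dotProduct, dotProduct_smul,
        smul_eq_mul]
      ring)
    (fun p q q' => by
      simp only [symplForm, Prod.fst_add, Prod.snd_add, add_dotProduct, dotProduct_add]
      ring)
    (fun c p q => by
      simp only [symplForm, Prod.smul_fst, Prod.smul_snd, smul_dotProduct, dotProduct_smul,
        smul_eq_mul]
      ring)

@[simp] lemma sympl_apply {n : ℕ} (p q : (Fin n → ℝ) × (Fin n → ℝ)) :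
    sympl n p q = symplForm p q := rfl

lemma sympl_refl {n : ℕ} : (sympl n).IsRefl := by
  intro p q h
  simp only [sympl_apply] at *
  rw [symplForm_swap, h, neg_zero]

lemma sympl_nondeg {n : ℕ} : (sympl n).Nondegenerate := by
  refine (LinearMap.IsRefl.nondegenerate_iff_separatingLeft sympl_refl).mpr ?_
  rintro ⟨a, b⟩ h
  have h1 := h (b, -a)
  simp only [sympl_apply, symplForm, neg_dotProduct] at h1
  have hn1 : (0:ℝ) ≤ a ⬝ᵥ a := Finset.sum_nonneg fun i _ => mul_self_nonneg _
  have hn2 : (0:ℝ) ≤ b ⬝ᵥ b := Finset.sum_nonneg fun i _ => mul_self_nonneg _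
  have e1 : a ⬝ᵥ a = 0 := by linarith
  have e2 : b ⬝ᵥ b = 0 := by linarith
  have ha : a = 0 := dotProduct_self_eq_zero.mp e1
  have hb : b = 0 := dotProduct_self_eq_zero.mp e2
  rw [ha, hb]
  rfl

/-- The dot product as a bilinear form on `α → ℝ`. -/
noncomputable def dotForm (α : Type) [Fintype α] : LinearMap.BilinForm ℝ (α → ℝ) :=
  LinearMap.mk₂ ℝ (· ⬝ᵥ ·)
    (fun x x' y => add_dotProduct x x' y)
    (fun c x y => smul_dotProduct c x y)
    (fun x y y' => dotProduct_add x y y')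
    (fun c x y => dotProduct_smul c x y)

@[simp] lemma dotForm_apply {α : Type} [Fintype α] (x y : α → ℝ) :
    dotForm α x y = x ⬝ᵥ y := rfl

/-- A proper subspace of `α → ℝ` has a nonzero vector orthogonal to it. -/
lemma exists_dot_ne_orthogonal {α : Type} [Fintype α]
    (R : Submodule ℝ (α → ℝ)) (h : R ≠ ⊤) :
    ∃ c : α → ℝ, c ≠ 0 ∧ ∀ x ∈ R, x ⬝ᵥ c = 0 := by
  have href : (dotForm α).IsRefl := by
    intro x y hxy
    simp only [dotForm_apply] at *
    rwa [dotProduct_comm]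
  have hnd : (dotForm α).Nondegenerate := by
    refine (LinearMap.IsRefl.nondegenerate_iff_separatingLeft href).mpr ?_
    intro x hx
    have := hx x
    simp only [dotForm_apply] at this
    exact dotProduct_self_eq_zero.mp this
  have hfin : Module.finrank ℝ ((dotForm α).orthogonal R) =
      Module.finrank ℝ (α → ℝ) - Module.finrank ℝ R :=
    LinearMap.BilinForm.finrank_orthogonal hnd R
  have hlt : Module.finrank ℝ R < Module.finrank ℝ (α → ℝ) :=
    Submodule.finrank_lt h
  have hne : (dotForm α).orthogonal R ≠ ⊥ := by
    intro hbot
    rw [hbot, finrank_bot] at hfin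
    omega
  obtain ⟨c, hc, hc0⟩ := Submodule.exists_mem_ne_zero_of_ne_bot hne
  refine ⟨c, hc0, fun x hx => ?_⟩
  have := hc x hx
  simpa only [LinearMap.BilinForm.IsOrtho, dotForm_apply] using this

lemma sum_mul_single {n : ℕ} (c : Fin n → ℝ) (b : Fin n) :
    ∑ i, c i * (Pi.single b (1:ℝ) : Fin n → ℝ) i = c b := by
  simp [Pi.single_apply, mul_ite]

/-- Coordinate selection map. -/
def phi (n : ℕ) (I : Finset (Fin n)) :
    ((Fin n → ℝ) × (Fin n → ℝ)) →ₗ[ℝ] (Fin n → ℝ) where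
  toFun p := fun i => if i ∈ I then p.1 i else p.2 i
  map_add' p q := by
    funext i
    by_cases h : i ∈ I <;> simp [h]
  map_smul' c p := by
    funext i
    by_cases h : i ∈ I <;> simp [h]

@[simp] lemma phi_apply {n : ℕ} (I : Finset (Fin n)) (p : (Fin n → ℝ) × (Fin n → ℝ))
    (i : Fin n) : phi n I p i = if i ∈ I then p.1 i else p.2 i := rfl

end LagrangianRep

open LagrangianRep

set_option maxHeartbeats 2000000 in
/-- Any Lagrangian subspace `L ⊆ ℝⁿ × ℝⁿ` admits a representation: there is a splitting
of the index set `{1,…,n}` into `I` and its complement `J = Iᶜ`, and a symmetric matrix `M`,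
such that `L = {(v,w) : w_I = M_II v_I + M_IJ w_J, v_J = −M_JI v_I − M_JJ w_J}`;
in particular `L` is parametrized by `(v_I, w_J)`. -/
theorem lagrangian_representation {n : ℕ}
    (L : Submodule ℝ ((Fin n → ℝ) × (Fin n → ℝ))) (hL : IsLagrangian L) :
    ∃ (I : Finset (Fin n)) (M : Matrix (Fin n) (Fin n) ℝ), M.IsSymm ∧
      ∀ v w : Fin n → ℝ, ((v, w) ∈ L ↔
        ((∀ i ∈ I, w i = (∑ j ∈ I, M i j * v j) + ∑ j ∈ Iᶜ, M i j * w j) ∧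
         (∀ j ∈ Iᶜ, v j = (- ∑ i ∈ I, M j i * v i) - ∑ i ∈ Iᶜ, M j i * w i))) := by
  classical
  obtain ⟨hiso, hmax⟩ := hL
  -- Step 1: maximality gives: anything symplectically orthogonal to L is in L.
  have horth : ∀ x : (Fin n → ℝ) × (Fin n → ℝ), (∀ p ∈ L, symplForm p x = 0) → x ∈ L := by
    intro x hx
    have hiso' : IsIsotropic (L ⊔ Submodule.span ℝ {x}) := by
      intro a ha b hb
      rw [Submodule.mem_sup] at ha hb
      obtain ⟨p, hp, za, hza, rfl⟩ := ha
      obtain ⟨q, hq, zb, hzb, rfl⟩ := hb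
      obtain ⟨s, rfl⟩ := Submodule.mem_span_singleton.mp hza
      obtain ⟨t, rfl⟩ := Submodule.mem_span_singleton.mp hzb
      have h1 := hiso p hp q hq
      have h2 := hx p hp
      have h3 := hx q hq
      simp only [symplForm, Prod.fst_add, Prod.snd_add, Prod.smul_fst, Prod.smul_snd,
        dotProduct_add, add_dotProduct, smul_dotProduct, dotProduct_smul, smul_eq_mul] at *
      linear_combination h1 + t * h2 - s * h3
    have hEq := hmax _ hiso' le_sup_left
    exact hEq ▸ Submodule.mem_sup_right (Submodule.mem_span_singleton_self x)
  -- Step 2: L equals its symplectic orthogonal, hence has dimension n.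
  have horth_eq : (sympl n).orthogonal L = L := by
    apply le_antisymm
    · intro x hx
      rw [LinearMap.BilinForm.mem_orthogonal_iff] at hx
      exact horth x fun p hp => hx p hp
    · intro x hx
      rw [LinearMap.BilinForm.mem_orthogonal_iff]
      intro p hp
      exact hiso p hp x hx
  have hrankL : Module.finrank ℝ L = n := by
    have h2n : Module.finrank ℝ ((Fin n → ℝ) × (Fin n → ℝ)) = n + n := by
      simp [Module.finrank_prod]
    have hkey := LinearMap.BilinForm.finrank_add_finrank_orthogonal
      (B := sympl n) sympl_refl L
    rw [LinearMap.BilinForm.orthogonal_top_eq_bot sympl_nondeg, inf_bot_eq, finrank_bot,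
      add_zero, horth_eq, h2n] at hkey
    omega
  -- Step 3: choose a minimal index set I on which the first-coordinate projection is injective.
  set V : Submodule ℝ (Fin n → ℝ) := L.map (LinearMap.fst ℝ _ _) with hV
  have hex : ∃ k : ℕ, ∃ I : Finset (Fin n), I.card = k ∧
      ∀ v ∈ V, (∀ i ∈ I, v i = 0) → v = 0 :=
    ⟨(univ : Finset (Fin n)).card, univ, rfl, fun v _ h => funext fun i => h i (mem_univ i)⟩
  obtain ⟨I, hIcard, hIinj⟩ := Nat.find_spec hex
  -- Step 4: minimality gives surjectivity onto the I-coordinates.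
  have hsurjI : ∀ c : Fin n → ℝ, ∃ v ∈ V, ∀ i ∈ I, v i = c i := by
    by_contra hcon
    push_neg at hcon
    obtain ⟨c, hc⟩ := hcon
    set ρ : (Fin n → ℝ) →ₗ[ℝ] ({ i // i ∈ I } → ℝ) :=
      LinearMap.funLeft ℝ ℝ (fun i => (i : Fin n)) with hρ
    have hRne : V.map ρ ≠ ⊤ := by
      intro htop
      have hmem : (fun i : {i // i ∈ I} => c i) ∈ V.map ρ := htop ▸ Submodule.mem_top
      obtain ⟨v, hvV, hv⟩ := hmem
      obtain ⟨i, hiI, hne⟩ := hc v hvV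
      exact hne (congrFun hv ⟨i, hiI⟩)
    obtain ⟨d, hd0, hd⟩ := exists_dot_ne_orthogonal _ hRne
    obtain ⟨i0, hi0⟩ : ∃ i0, d i0 ≠ 0 := Function.ne_iff.mp hd0
    have hP' : ∀ v ∈ V, (∀ i ∈ I.erase (i0 : Fin n), v i = 0) → v = 0 := by
      intro v hv hvz
      have hdot : ∑ i : {i // i ∈ I}, v (i : Fin n) * d i = 0 :=
        hd (ρ v) ⟨v, hv, rfl⟩
      have hvi0 : v (i0 : Fin n) = 0 := by
        rw [Finset.sum_eq_single i0] at hdot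
        · rcases mul_eq_zero.mp hdot with h | h
          · exact h
          · exact absurd h hi0
        · intro j _ hj
          have hj' : (j : Fin n) ∈ I.erase (i0 : Fin n) :=
            Finset.mem_erase.mpr ⟨fun h => hj (Subtype.ext h), j.2⟩
          rw [hvz _ hj', zero_mul]
        · intro h
          exact absurd (Finset.mem_univ i0) h
      apply hIinj v hv
      intro i hi
      by_cases h : i = (i0 : Fin n)
      · rw [h]; exact hvi0
      · exact hvz i (Finset.mem_erase.mpr ⟨h, hi⟩)
    have hlt : (I.erase (i0 : Fin n)).card < Nat.find hex :=
      hIcard ▸ Finset.card_erase_lt_of_mem i0.2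
    exact Nat.find_min hex hlt ⟨I.erase (i0 : Fin n), rfl, hP'⟩
  -- Step 5: the map `Φ = (v_I, w_J)` restricted to L is bijective.
  set Φ := phi n I with hΦ
  have hΦinj : ∀ p ∈ L, Φ p = 0 → p = 0 := by
    rintro ⟨v, w⟩ hp h0
    have hv_I : ∀ i ∈ I, v i = 0 := by
      intro i hi
      have := congrFun h0 i
      simpa [hΦ, hi] using this
    have hw_J : ∀ i, i ∉ I → w i = 0 := by
      intro i hi
      have := congrFun h0 i
      simpa [hΦ, hi] using this
    have hvV : v ∈ V := ⟨(v, w), hp, rfl⟩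
    have hv : v = 0 := hIinj v hvV hv_I
    subst hv
    have hw : w = 0 := by
      obtain ⟨v', hv'V, hv'⟩ := hsurjI w
      obtain ⟨⟨v'', w'⟩, hmem, hfst⟩ := hv'V
      have hd : symplForm ((0 : Fin n → ℝ), w) (v'', w') = 0 := hiso _ hp _ hmem
      have hw2 : w ⬝ᵥ v'' = 0 := by
        simpa [symplForm] using hd
      have hz : ∑ i ∈ Iᶜ, w i * v'' i = 0 :=
        Finset.sum_eq_zero fun i hi => by rw [hw_J i (Finset.mem_compl.mp hi), zero_mul]
      have hsplit : ∑ i ∈ I, w i * v'' i + ∑ i ∈ Iᶜ, w i * v'' i = w ⬝ᵥ v'' :=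
        Finset.sum_add_sum_compl I _
      have hIsum : ∑ i ∈ I, w i * v'' i = 0 := by
        rw [hz, add_zero, hw2] at hsplit
        exact hsplit
      have hsq : ∑ i ∈ I, w i * w i = 0 := by
        rw [← hIsum]
        apply Finset.sum_congr rfl
        intro i hi
        have hvi : v'' i = v' i := congrFun hfst i
        rw [hvi, hv' i hi]
      funext i
      by_cases hi : i ∈ I
      · have := (Finset.sum_eq_zero_iff_of_nonneg
          (fun j _ => mul_self_nonneg (w j))).mp hsq i hi
        exact mul_self_eq_zero.mp this
      · exact hw_J i hi
    rw [hw]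
    rfl
  have hker : LinearMap.ker (Φ.domRestrict L) = ⊥ := by
    apply (Submodule.eq_bot_iff _).mpr
    rintro ⟨p, hp⟩ hx
    have hx' : Φ p = 0 := hx
    exact Subtype.ext (hΦinj p hp hx')
  have hinj : Function.Injective (Φ.domRestrict L) := LinearMap.ker_eq_bot.mp hker
  have hfr : Module.finrank ℝ L = Module.finrank ℝ (Fin n → ℝ) := by
    rw [hrankL]
    simp [Module.finrank_pi]
  have hsurj : Function.Surjective (Φ.domRestrict L) :=
    (LinearMap.injective_iff_surjective_of_finrank_eq_finrank hfr).mp hinj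
  let e : L ≃ₗ[ℝ] (Fin n → ℝ) := LinearEquiv.ofBijective _ ⟨hinj, hsurj⟩
  let G : (Fin n → ℝ) →ₗ[ℝ] (Fin n → ℝ) × (Fin n → ℝ) :=
    L.subtype ∘ₗ (e.symm : (Fin n → ℝ) →ₗ[ℝ] L)
  have hGL : ∀ u, G u ∈ L := fun u => (e.symm u).2
  have hΦG : ∀ u, Φ (G u) = u := by
    intro u
    have h1 : e (e.symm u) = u := e.apply_symm_apply u
    exact h1
  have hGΦ : ∀ p, p ∈ L → G (Φ p) = p := by
    intro p hp
    have h1 : e ⟨p, hp⟩ = Φ p := rfl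
    have h2 : e.symm (Φ p) = ⟨p, hp⟩ := by rw [← h1, e.symm_apply_apply]
    show L.subtype (e.symm (Φ p)) = p
    rw [h2]
    rfl
  -- Step 6: define the matrix M.
  set M : Matrix (Fin n) (Fin n) ℝ := fun i j =>
    if i ∈ I then (G (Pi.single j 1)).2 i else -(G (Pi.single j 1)).1 i with hM
  have hGdecomp : ∀ u : Fin n → ℝ, G u = ∑ j, u j • G (Pi.single j 1) := by
    intro u
    have hu : u = ∑ j, u j • (Pi.single j (1:ℝ) : Fin n → ℝ) := by
      funext i
      rw [Finset.sum_apply]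
      simp [Pi.single_apply, mul_ite]
    conv_lhs => rw [hu]
    rw [map_sum]
    apply Finset.sum_congr rfl
    intro j _
    rw [_root_.map_smul]
  have hG2 : ∀ u, ∀ i ∈ I, (G u).2 i = ∑ j, M i j * u j := by
    intro u i hi
    rw [hGdecomp u]
    rw [Prod.snd_sum, Finset.sum_apply]
    apply Finset.sum_congr rfl
    intro j _
    rw [hM]
    simp only [Prod.smul_snd, Pi.smul_apply, smul_eq_mul, if_pos hi]
    ring
  have hG1 : ∀ u, ∀ j, j ∉ I → (G u).1 j = -∑ k, M j k * u k := by
    intro u j hj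
    rw [hGdecomp u]
    rw [Prod.fst_sum, Finset.sum_apply, ← Finset.sum_neg_distrib]
    apply Finset.sum_congr rfl
    intro k _
    rw [hM]
    simp only [Prod.smul_fst, Pi.smul_apply, smul_eq_mul, if_neg hj]
    ring
  have hG1' : ∀ u, ∀ i ∈ I, (G u).1 i = u i := by
    intro u i hi
    have := congrFun (hΦG u) i
    simpa [hΦ, hi] using this
  have hG2' : ∀ u, ∀ i, i ∉ I → (G u).2 i = u i := by
    intro u i hi
    have := congrFun (hΦG u) i
    simpa [hΦ, hi] using this
  -- Step 7: M is symmetric.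
  have key : ∀ a b, M a b = M b a := by
    intro a b
    set x := G (Pi.single a 1) with hx
    set y := G (Pi.single b 1) with hy
    have h0 : symplForm x y = 0 := hiso x (hGL _) y (hGL _)
    have hx2 : ∀ i, x.2 i = if i ∈ I then M i a else (Pi.single a (1:ℝ) : Fin n → ℝ) i := by
      intro i
      by_cases hi : i ∈ I
      · rw [if_pos hi, hx, hG2 _ i hi, sum_mul_single (fun j => M i j) a]
      · rw [if_neg hi, hx, hG2' _ i hi]
    have hx1 : ∀ i, x.1 i = if i ∈ I then (Pi.single a (1:ℝ) : Fin n → ℝ) i else -M i a := by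
      intro i
      by_cases hi : i ∈ I
      · rw [if_pos hi, hx, hG1' _ i hi]
      · rw [if_neg hi, hx, hG1 _ i hi, sum_mul_single (fun j => M i j) a]
    have hy2 : ∀ i, y.2 i = if i ∈ I then M i b else (Pi.single b (1:ℝ) : Fin n → ℝ) i := by
      intro i
      by_cases hi : i ∈ I
      · rw [if_pos hi, hy, hG2 _ i hi, sum_mul_single (fun j => M i j) b]
      · rw [if_neg hi, hy, hG2' _ i hi]
    have hy1 : ∀ i, y.1 i = if i ∈ I then (Pi.single b (1:ℝ) : Fin n → ℝ) i else -M i b := by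
      intro i
      by_cases hi : i ∈ I
      · rw [if_pos hi, hy, hG1' _ i hi]
      · rw [if_neg hi, hy, hG1 _ i hi, sum_mul_single (fun j => M i j) b]
    have e1 : x.2 ⬝ᵥ y.1 = (if b ∈ I then M b a else 0) - (if a ∈ I then 0 else M a b) := by
      have hstep : x.2 ⬝ᵥ y.1 = ∑ i, ((fun i => if i ∈ I then M i a else 0) i * (Pi.single b (1:ℝ) : Fin n → ℝ) i
          - (fun i => if i ∈ I then 0 else M i b) i * (Pi.single a (1:ℝ) : Fin n → ℝ) i) := by
        apply Finset.sum_congr rfl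
        intro i _
        rw [hx2 i, hy1 i]
        by_cases hi : i ∈ I <;> simp only [if_pos, if_neg, hi, if_true, if_false] <;> ring
      rw [hstep, Finset.sum_sub_distrib, sum_mul_single, sum_mul_single]
    have e2 : y.2 ⬝ᵥ x.1 = (if a ∈ I then M a b else 0) - (if b ∈ I then 0 else M b a) := by
      have hstep : y.2 ⬝ᵥ x.1 = ∑ i, ((fun i => if i ∈ I then M i b else 0) i * (Pi.single a (1:ℝ) : Fin n → ℝ) i
          - (fun i => if i ∈ I then 0 else M i a) i * (Pi.single b (1:ℝ) : Fin n → ℝ) i) := by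
        apply Finset.sum_congr rfl
        intro i _
        rw [hy2 i, hx1 i]
        by_cases hi : i ∈ I <;> simp only [if_pos, if_neg, hi, if_true, if_false] <;> ring
      rw [hstep, Finset.sum_sub_distrib, sum_mul_single, sum_mul_single]
    rw [symplForm, e1, e2] at h0
    by_cases ha : a ∈ I <;> by_cases hb : b ∈ I <;>
      simp only [ha, hb, if_true, if_false] at h0 <;> linarith
  have hMsymm : M.IsSymm := by
    apply Matrix.ext
    intro i j
    rw [Matrix.transpose_apply]
    exact key j i
  -- Step 8: conclude.
  refine ⟨I, M, hMsymm, ?_⟩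
  intro v w
  constructor
  · intro hmem
    have hG := hGΦ (v, w) hmem
    set u : Fin n → ℝ := Φ (v, w) with hu
    have huv : ∀ j ∈ I, u j = v j := by
      intro j hj
      simp [hu, hΦ, hj]
    have huw : ∀ j ∈ Iᶜ, u j = w j := by
      intro j hj
      simp [hu, hΦ, Finset.mem_compl.mp hj]
    constructor
    · intro i hi
      have h2 := hG2 u i hi
      rw [hG] at h2
      have h2' : w i = ∑ j, M i j * u j := h2
      rw [h2', ← Finset.sum_add_sum_compl I (fun j => M i j * u j)]
      congr 1
      · exact Finset.sum_congr rfl fun j hj => by rw [huv j hj]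
      · exact Finset.sum_congr rfl fun j hj => by rw [huw j hj]
    · intro j hj
      have hjI := Finset.mem_compl.mp hj
      have h1 := hG1 u j hjI
      rw [hG] at h1
      have h1' : v j = -∑ k, M j k * u k := h1
      have hA : ∑ k ∈ I, M j k * u k = ∑ k ∈ I, M j k * v k :=
        Finset.sum_congr rfl fun k hk => by rw [huv k hk]
      have hB : ∑ k ∈ Iᶜ, M j k * u k = ∑ k ∈ Iᶜ, M j k * w k :=
        Finset.sum_congr rfl fun k hk => by rw [huw k hk]
      rw [h1', ← Finset.sum_add_sum_compl I (fun k => M j k * u k), hA, hB]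
      ring
  · rintro ⟨h1, h2⟩
    set u : Fin n → ℝ := fun i => if i ∈ I then v i else w i with hu
    have huv : ∀ j ∈ I, u j = v j := fun j hj => by simp [hu, hj]
    have huw : ∀ j, j ∉ I → u j = w j := fun j hj => by simp [hu, hj]
    have hxy : G u = (v, w) := by
      have hfst : (G u).1 = v := by
        funext k
        by_cases hk : k ∈ I
        · rw [hG1' u k hk, huv k hk]
        · rw [hG1 u k hk, ← Finset.sum_add_sum_compl I (fun j => M k j * u j)]
          have hA : ∑ j ∈ I, M k j * u j = ∑ j ∈ I, M k j * v j :=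
            Finset.sum_congr rfl fun j hj => by rw [huv j hj]
          have hB : ∑ j ∈ Iᶜ, M k j * u j = ∑ j ∈ Iᶜ, M k j * w j :=
            Finset.sum_congr rfl fun j hj => by rw [huw j (Finset.mem_compl.mp hj)]
          rw [hA, hB, h2 k (Finset.mem_compl.mpr hk)]
          ring
      have hsnd : (G u).2 = w := by
        funext k
        by_cases hk : k ∈ I
        · rw [hG2 u k hk, ← Finset.sum_add_sum_compl I (fun j => M k j * u j)]
          have hA : ∑ j ∈ I, M k j * u j = ∑ j ∈ I, M k j * v j :=
            Finset.sum_congr rfl fun j hj => by rw [huv j hj]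
          have hB : ∑ j ∈ Iᶜ, M k j * u j = ∑ j ∈ Iᶜ, M k j * w j :=
            Finset.sum_congr rfl fun j hj => by rw [huw j (Finset.mem_compl.mp hj)]
          rw [hA, hB, h1 k hk]
        · rw [hG2' u k hk, huw k hk]
      exact Prod.ext hfst hsnd
    rw [← hxy]
    exact hGL u
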